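/- Let G ⊆ [0,1]² be a closed convex set and f = 1_G. Define f_a(x,y) = ∫₀¹∫₀¹ β_α(t,x) β_{α′}(s,y) 1_G(t,s) dt ds for a = (α, α′) ∈ ℕ₊ × ℕ₊. Then f_a converges to f in L¹([0,1]²) as α, α′ → ∞; that is, ∫_{[0,1]²} |f_a(x,y) − f(x,y)| dx dy → 0. -/

import Mathlib

open MeasureTheory Filter

/-- The Beta function `B(u,v) = Γ(u)Γ(v)/Γ(u+v)`. -/
noncomputable def betaFn (u v : ℝ) : ℝ :=
  Real.Gamma u * Real.Gamma v / Real.Gamma (u + v)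

/-- The beta kernel `β_α(t,x) = t^⌊αx⌋ (1−t)^(α−⌊αx⌋) / B(⌊αx⌋+1, α−⌊αx⌋+1)`. -/
noncomputable def betaKer (α : ℕ) (x t : ℝ) : ℝ :=
  t ^ ⌊(α : ℝ) * x⌋₊ * (1 - t) ^ (α - ⌊(α : ℝ) * x⌋₊) /
    betaFn ((⌊(α : ℝ) * x⌋₊ : ℝ) + 1) (((α - ⌊(α : ℝ) * x⌋₊ : ℕ) : ℝ) + 1)

/-- Moment-recovered approximation of the indicator of `G`:
`f_a(x,y) = ∫₀¹∫₀¹ β_α(t,x) β_{α′}(s,y) 1_G(t,s) dt ds`. -/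
noncomputable def indApprox (G : Set (ℝ × ℝ)) (α α' : ℕ) (x y : ℝ) : ℝ :=
  ∫ t in (0:ℝ)..1, ∫ s in (0:ℝ)..1,
    betaKer α x t * betaKer α' y s * Set.indicator G (fun _ => (1:ℝ)) (t, s)

lemma prod_fact (k m : ℕ) :
    (∏ j ∈ Finset.range m, ((k : ℂ) + 1 + j)) * (k.factorial : ℂ) = ((k + m).factorial : ℂ) := by
  induction m with
  | zero => simp
  | succ m ih =>
    rw [Finset.prod_range_succ, mul_right_comm, ih]
    rw [show k + (m+1) = (k+m) + 1 by ring, Nat.factorial_succ]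
    push_cast; ring

lemma integral_pow_mul_one_sub_pow (k n : ℕ) :
    ∫ t in (0:ℝ)..1, t ^ k * (1 - t) ^ n
      = (k.factorial * n.factorial : ℝ) / (k + n + 1).factorial := by
  have h := Complex.betaIntegral_eval_nat_add_one_right
    (u := (k : ℂ) + 1) (by simp; positivity) n
  rw [Complex.betaIntegral] at h
  have e1 : ∀ x : ℝ, (x:ℂ) ^ ((k:ℂ) + 1 - 1) * (1 - (x:ℂ)) ^ ((n:ℂ) + 1 - 1)
      = ((x ^ k * (1-x)^n : ℝ) : ℂ) := by
    intro x
    rw [add_sub_cancel_right, add_sub_cancel_right, Complex.cpow_natCast, Complex.cpow_natCast]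
    push_cast; ring
  simp_rw [e1] at h
  rw [intervalIntegral.integral_ofReal] at h
  have h2 : (∏ j ∈ Finset.range (n+1), ((k:ℂ) + 1 + j)) ≠ 0 := by
    apply Finset.prod_ne_zero_iff.2
    intro j _
    have : (0:ℝ) < (k:ℝ) + 1 + j := by positivity
    simp only [ne_eq]
    intro hc
    have := congrArg Complex.re hc
    push_cast at this; simp at this; linarith
  have h3 : ((∫ t in (0:ℝ)..1, t ^ k * (1 - t) ^ n : ℝ) : ℂ)
      = (k.factorial * n.factorial : ℝ) / (k + n + 1).factorial := by
    rw [h, div_eq_div_iff h2 (by exact_mod_cast Nat.cast_ne_zero.2 (k+n+1).factorial_ne_zero)]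
    rw [show k + n + 1 = k + (n+1) by ring, ← prod_fact k (n+1)]
    push_cast
    ring
  exact_mod_cast h3

lemma betaFn_nat (k n : ℕ) :
    betaFn ((k:ℝ)+1) ((n:ℝ)+1) = (k.factorial * n.factorial : ℝ) / (k + n + 1).factorial := by
  unfold betaFn
  rw [show (k:ℝ)+1+((n:ℝ)+1) = ((k+n+1 : ℕ):ℝ)+1 by push_cast; ring]
  rw [show ((k:ℝ)+1) = ((k:ℕ):ℝ)+1 from rfl, Real.Gamma_nat_eq_factorial,
    show ((n:ℝ)+1) = ((n:ℕ):ℝ)+1 from rfl, Real.Gamma_nat_eq_factorial,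
    Real.Gamma_nat_eq_factorial]

lemma betaFn_nat_pos (k n : ℕ) : 0 < betaFn ((k:ℝ)+1) ((n:ℝ)+1) := by
  rw [betaFn_nat]
  positivity

/-- normalized kernel as explicit function -/
noncomputable def nker (k n : ℕ) (t : ℝ) : ℝ :=
  t ^ k * (1 - t) ^ n / betaFn ((k:ℝ)+1) ((n:ℝ)+1)

lemma betaKer_eq (α : ℕ) (x : ℝ) : betaKer α x = nker ⌊(α:ℝ)*x⌋₊ (α - ⌊(α:ℝ)*x⌋₊) := by
  funext t
  simp [betaKer, nker]

lemma nker_cont (k n : ℕ) : Continuous (nker k n) := by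
  unfold nker
  fun_prop

lemma nker_nonneg (k n : ℕ) {t : ℝ} (h0 : 0 ≤ t) (h1 : t ≤ 1) : 0 ≤ nker k n t := by
  unfold nker
  exact div_nonneg (mul_nonneg (pow_nonneg h0 k) (pow_nonneg (by linarith) n))
    (betaFn_nat_pos k n).le

lemma nker_integral (k n : ℕ) : ∫ t in (0:ℝ)..1, nker k n t = 1 := by
  unfold nker
  rw [intervalIntegral.integral_div, integral_pow_mul_one_sub_pow, betaFn_nat, div_self]
  positivity

lemma nker_moment1 (k n : ℕ) :
    ∫ t in (0:ℝ)..1, t * nker k n t = ((k:ℝ)+1) / ((k:ℝ)+(n:ℝ)+2) := by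
  unfold nker
  have e : ∀ t : ℝ, t * (t ^ k * (1 - t) ^ n / betaFn ((k:ℝ)+1) ((n:ℝ)+1))
      = t ^ (k+1) * (1 - t) ^ n / betaFn ((k:ℝ)+1) ((n:ℝ)+1) := by
    intro t; rw [pow_succ]; ring
  simp_rw [e]
  rw [intervalIntegral.integral_div, integral_pow_mul_one_sub_pow, betaFn_nat]
  rw [show k + 1 + n + 1 = (k+n+1) + 1 by ring, Nat.factorial_succ (k+n+1),
    Nat.factorial_succ k]
  have h1 : ((k+n+1).factorial : ℝ) ≠ 0 := by positivity
  have h2 : (k.factorial : ℝ) ≠ 0 := by positivity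
  have h3 : (n.factorial : ℝ) ≠ 0 := by positivity
  field_simp
  push_cast
  ring

lemma nker_moment2 (k n : ℕ) :
    ∫ t in (0:ℝ)..1, t^2 * nker k n t
      = ((k:ℝ)+1) * ((k:ℝ)+2) / (((k:ℝ)+(n:ℝ)+2) * ((k:ℝ)+(n:ℝ)+3)) := by
  unfold nker
  have e : ∀ t : ℝ, t^2 * (t ^ k * (1 - t) ^ n / betaFn ((k:ℝ)+1) ((n:ℝ)+1))
      = t ^ (k+2) * (1 - t) ^ n / betaFn ((k:ℝ)+1) ((n:ℝ)+1) := by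
    intro t; rw [pow_add]; ring
  simp_rw [e]
  rw [intervalIntegral.integral_div, integral_pow_mul_one_sub_pow, betaFn_nat]
  rw [show k + 2 + n + 1 = ((k+n+1) + 1) + 1 by ring, Nat.factorial_succ ((k+n+1)+1),
    Nat.factorial_succ (k+n+1), show k + 2 = (k+1)+1 by ring, Nat.factorial_succ (k+1),
    Nat.factorial_succ k]
  have h1 : ((k+n+1).factorial : ℝ) ≠ 0 := by positivity
  have h2 : (k.factorial : ℝ) ≠ 0 := by positivity
  have h3 : (n.factorial : ℝ) ≠ 0 := by positivity
  field_simp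
  push_cast
  ring

lemma nker_sq_moment (k n : ℕ) (x : ℝ) :
    ∫ t in (0:ℝ)..1, nker k n t * (t - x)^2
      = ((k:ℝ)+1)*((k:ℝ)+2)/(((k:ℝ)+(n:ℝ)+2)*((k:ℝ)+(n:ℝ)+3))
        - 2*x*(((k:ℝ)+1)/((k:ℝ)+(n:ℝ)+2)) + x^2 := by
  have hc := nker_cont k n
  have e : ∀ t:ℝ, nker k n t * (t-x)^2
      = t^2 * nker k n t - (2*x)*(t*nker k n t) + x^2*(nker k n t) := by intro t; ring
  simp_rw [e]
  rw [intervalIntegral.integral_add (by apply Continuous.intervalIntegrable; fun_prop)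
      (by apply Continuous.intervalIntegrable; fun_prop),
    intervalIntegral.integral_sub (by apply Continuous.intervalIntegrable; fun_prop)
      (by apply Continuous.intervalIntegrable; fun_prop),
    intervalIntegral.integral_const_mul, intervalIntegral.integral_const_mul,
    nker_moment1, nker_moment2, nker_integral, mul_one]

lemma nker_var_bound (α : ℕ) (hα : 1 ≤ α) {x : ℝ} (hx0 : 0 ≤ x) (hx1 : x ≤ 1) :
    ∫ t in (0:ℝ)..1, nker ⌊(α:ℝ)*x⌋₊ (α - ⌊(α:ℝ)*x⌋₊) t * (t-x)^2 ≤ 5/α := by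
  set k := ⌊(α:ℝ)*x⌋₊ with hk
  have hk_le : (k:ℝ) ≤ (α:ℝ)*x := Nat.floor_le (by positivity)
  have hk_lt : (α:ℝ)*x < (k:ℝ)+1 := Nat.lt_floor_add_one _
  have hkα : k ≤ α := by
    have h1 : (α:ℝ)*x ≤ ((α:ℕ):ℝ) := by nlinarith
    have := Nat.floor_le_floor h1
    rwa [Nat.floor_natCast] at this
  have hn : ((α - k : ℕ):ℝ) = (α:ℝ) - (k:ℝ) := by
    rw [Nat.cast_sub hkα]
  rw [nker_sq_moment, hn]
  set A := (α:ℝ) with hA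
  have hA1 : 1 ≤ A := Nat.one_le_cast.mpr hα
  set K := (k:ℝ) with hK
  have hK0 : 0 ≤ K := Nat.cast_nonneg k
  have e2 : K + (A - K) + 2 = A + 2 := by ring
  have e3 : K + (A - K) + 3 = A + 3 := by ring
  rw [e2, e3]
  have hA2 : (0:ℝ) < A + 2 := by linarith
  have hA3 : (0:ℝ) < A + 3 := by linarith
  have hApos : (0:ℝ) < A := by linarith
  have id1 : (K+1)*(K+2)/((A+2)*(A+3)) - 2*x*((K+1)/(A+2)) + x^2
      = (K+1)*(A+1-K)/((A+2)^2*(A+3)) + ((K+1-x*(A+2))/(A+2))^2 := by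
    field_simp
    ring
  rw [id1]
  have h1 : (K+1)*(A+1-K)/((A+2)^2*(A+3)) ≤ 1/A := by
    rw [div_le_div_iff₀ (by positivity) hApos]
    nlinarith [sq_nonneg (A - 2*K), sq_nonneg (A+2)]
  have h2 : ((K+1-x*(A+2))/(A+2))^2 ≤ 4/A := by
    have hu1 : K+1-x*(A+2) ≤ 1 := by nlinarith
    have hu2 : -2 ≤ K+1-x*(A+2) := by nlinarith
    rw [div_pow, div_le_div_iff₀ (by positivity) hApos]
    nlinarith [sq_nonneg (A+2), mul_nonneg (by linarith : (0:ℝ) ≤ K+1-x*(A+2)+2)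
      (by linarith : (0:ℝ) ≤ 1-(K+1-x*(A+2)))]
  have : (5:ℝ)/A = 1/A + 4/A := by ring
  rw [this]
  exact add_le_add h1 h2

section core

variable {f g : ℝ → ℝ} {h : ℝ × ℝ → ℝ}

lemma inner_ii (hg : Continuous g) (hmeas : Measurable h) (h0 : ∀ q, 0 ≤ h q)
    (h1 : ∀ q, h q ≤ 1) (t : ℝ) :
    IntervalIntegrable (fun s => g s * h (t, s)) volume 0 1 := by
  refine (hg.intervalIntegrable 0 1).mono_fun ?_ ?_
  · exact ((hg.measurable.mul (hmeas.comp measurable_prodMk_left)).aestronglyMeasurable)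
  · refine Filter.Eventually.of_forall fun s => ?_
    have := h0 (t, s); have := h1 (t, s)
    simp only [Real.norm_eq_abs, abs_mul]
    calc |g s| * |h (t, s)| ≤ |g s| * 1 := by
          apply mul_le_mul_of_nonneg_left _ (abs_nonneg _)
          rw [abs_le]; constructor <;> linarith
      _ = |g s| := mul_one _

lemma J_nonneg (hg0 : ∀ s ∈ Set.Icc (0:ℝ) 1, 0 ≤ g s) (h0 : ∀ q, 0 ≤ h q) (t : ℝ) :
    0 ≤ ∫ s in (0:ℝ)..1, g s * h (t, s) :=
  intervalIntegral.integral_nonneg zero_le_one fun s hs => mul_nonneg (hg0 s hs) (h0 _)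

lemma J_le_one (hg : Continuous g) (hg0 : ∀ s ∈ Set.Icc (0:ℝ) 1, 0 ≤ g s)
    (hgm : ∫ s in (0:ℝ)..1, g s = 1) (hmeas : Measurable h) (h0 : ∀ q, 0 ≤ h q)
    (h1 : ∀ q, h q ≤ 1) (t : ℝ) :
    ∫ s in (0:ℝ)..1, g s * h (t, s) ≤ 1 := by
  calc ∫ s in (0:ℝ)..1, g s * h (t, s) ≤ ∫ s in (0:ℝ)..1, g s := by
        apply intervalIntegral.integral_mono_on zero_le_one
          (inner_ii hg hmeas h0 h1 t) (hg.intervalIntegrable 0 1)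
        intro s hs
        exact mul_le_of_le_one_right (hg0 s hs) (h1 _)
    _ = 1 := hgm

lemma J_meas (hg : Continuous g) (hmeas : Measurable h) :
    Measurable (fun t => ∫ s in (0:ℝ)..1, g s * h (t, s)) := by
  simp_rw [intervalIntegral.integral_of_le zero_le_one]
  have : StronglyMeasurable (fun q : ℝ × ℝ => g q.2 * h q) :=
    ((hg.measurable.comp measurable_snd).mul hmeas).stronglyMeasurable
  exact (StronglyMeasurable.integral_prod_right' (ν := volume.restrict (Set.Ioc 0 1)) this
    ).measurable

lemma outer_ii (hf : Continuous f) (hg : Continuous g)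
    (hg0 : ∀ s ∈ Set.Icc (0:ℝ) 1, 0 ≤ g s) (hgm : ∫ s in (0:ℝ)..1, g s = 1)
    (hmeas : Measurable h) (h0 : ∀ q, 0 ≤ h q) (h1 : ∀ q, h q ≤ 1) :
    IntervalIntegrable (fun t => f t * ∫ s in (0:ℝ)..1, g s * h (t, s)) volume 0 1 := by
  refine (hf.intervalIntegrable 0 1).mono_fun ?_ ?_
  · exact (hf.measurable.mul (J_meas hg hmeas)).aestronglyMeasurable
  · refine Filter.Eventually.of_forall fun t => ?_
    have hJ0 := J_nonneg hg0 h0 t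
    have hJ1 := J_le_one hg hg0 hgm hmeas h0 h1 t
    simp only [Real.norm_eq_abs, abs_mul]
    calc |f t| * |∫ s in (0:ℝ)..1, g s * h (t, s)| ≤ |f t| * 1 := by
          apply mul_le_mul_of_nonneg_left _ (abs_nonneg _)
          rw [abs_le]; constructor <;> linarith
      _ = |f t| := mul_one _

end core

section core2

variable {f g : ℝ → ℝ} {h : ℝ × ℝ → ℝ}

lemma core_nonneg (hf0 : ∀ t ∈ Set.Icc (0:ℝ) 1, 0 ≤ f t)
    (hg0 : ∀ s ∈ Set.Icc (0:ℝ) 1, 0 ≤ g s) (h0 : ∀ q, 0 ≤ h q) :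
    0 ≤ ∫ t in (0:ℝ)..1, ∫ s in (0:ℝ)..1, f t * g s * h (t, s) := by
  simp_rw [mul_assoc, intervalIntegral.integral_const_mul]
  exact intervalIntegral.integral_nonneg zero_le_one fun t ht =>
    mul_nonneg (hf0 t ht) (J_nonneg hg0 h0 t)

lemma core_bound {x y δ : ℝ} (hδ : 0 < δ)
    (hf : Continuous f) (hg : Continuous g)
    (hf0 : ∀ t ∈ Set.Icc (0:ℝ) 1, 0 ≤ f t) (hg0 : ∀ s ∈ Set.Icc (0:ℝ) 1, 0 ≤ g s)
    (hfm : ∫ t in (0:ℝ)..1, f t = 1) (hgm : ∫ s in (0:ℝ)..1, g s = 1)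
    (hmeas : Measurable h) (h0 : ∀ q, 0 ≤ h q) (h1 : ∀ q, h q ≤ 1)
    (hz : ∀ t s, |t - x| < δ → |s - y| < δ → h (t, s) = 0) :
    ∫ t in (0:ℝ)..1, ∫ s in (0:ℝ)..1, f t * g s * h (t, s)
      ≤ ((∫ t in (0:ℝ)..1, f t * (t-x)^2) + (∫ s in (0:ℝ)..1, g s * (s-y)^2)) / δ^2 := by
  set M := ∫ t in (0:ℝ)..1, f t * (t-x)^2 with hM
  set M' := ∫ s in (0:ℝ)..1, g s * (s-y)^2 with hM'
  have key : ∀ t s : ℝ, h (t, s) ≤ ((t-x)^2 + (s-y)^2)/δ^2 := by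
    intro t s
    by_cases hc : |t - x| < δ ∧ |s - y| < δ
    · rw [hz t s hc.1 hc.2]; positivity
    · rw [not_and_or, not_lt, not_lt] at hc
      have hge : δ^2 ≤ (t-x)^2 + (s-y)^2 := by
        rcases hc with hc | hc
        · have h2 : δ^2 ≤ (t-x)^2 := by
            rw [← sq_abs (t-x)]; exact pow_le_pow_left₀ hδ.le hc 2
          nlinarith [sq_nonneg (s-y)]
        · have h2 : δ^2 ≤ (s-y)^2 := by
            rw [← sq_abs (s-y)]; exact pow_le_pow_left₀ hδ.le hc 2
          nlinarith [sq_nonneg (t-x)]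
      calc h (t, s) ≤ 1 := h1 _
        _ ≤ ((t-x)^2 + (s-y)^2)/δ^2 := by
            rw [le_div_iff₀ (by positivity)]; linarith
  have hJle : ∀ t : ℝ, (∫ s in (0:ℝ)..1, g s * h (t, s)) ≤ ((t-x)^2 + M')/δ^2 := by
    intro t
    calc (∫ s in (0:ℝ)..1, g s * h (t, s))
        ≤ ∫ s in (0:ℝ)..1, g s * (((t-x)^2 + (s-y)^2)/δ^2) := by
          apply intervalIntegral.integral_mono_on zero_le_one
            (inner_ii hg hmeas h0 h1 t) ((hg.mul (by fun_prop)).intervalIntegrable 0 1)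
          exact fun s hs => mul_le_mul_of_nonneg_left (key t s) (hg0 s hs)
      _ = ((t-x)^2 + M')/δ^2 := by
          have e : ∀ s : ℝ, g s * (((t-x)^2 + (s-y)^2)/δ^2)
              = (g s * (t-x)^2)/δ^2 + (g s * (s-y)^2)/δ^2 := fun s => by ring
          simp_rw [e]
          rw [intervalIntegral.integral_add (f := fun s => g s * (t-x)^2/δ^2)
              (g := fun s => g s * (s-y)^2/δ^2)
              (((hg.mul continuous_const).div_const _).intervalIntegrable 0 1)
              (((hg.mul (by fun_prop)).div_const _).intervalIntegrable 0 1),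
            intervalIntegral.integral_div, intervalIntegral.integral_div,
            intervalIntegral.integral_mul_const, hgm, one_mul, ← hM', ← add_div]
  simp_rw [mul_assoc, intervalIntegral.integral_const_mul]
  calc (∫ t in (0:ℝ)..1, f t * ∫ s in (0:ℝ)..1, g s * h (t, s))
      ≤ ∫ t in (0:ℝ)..1, f t * (((t-x)^2 + M')/δ^2) := by
        apply intervalIntegral.integral_mono_on zero_le_one
          (outer_ii hf hg hg0 hgm hmeas h0 h1) ((hf.mul (by fun_prop)).intervalIntegrable 0 1)
        exact fun t ht => mul_le_mul_of_nonneg_left (hJle t) (hf0 t ht)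
    _ = (M + M')/δ^2 := by
        have e : ∀ t : ℝ, f t * (((t-x)^2 + M')/δ^2)
            = (f t * (t-x)^2)/δ^2 + (f t) * (M'/δ^2) := fun t => by ring
        simp_rw [e]
        rw [intervalIntegral.integral_add (f := fun t => f t * (t-x)^2/δ^2)
            (g := fun t => f t * (M'/δ^2))
            (((hf.mul (by fun_prop)).div_const _).intervalIntegrable 0 1)
            ((hf.mul continuous_const).intervalIntegrable 0 1),
          intervalIntegral.integral_div, intervalIntegral.integral_mul_const, hfm, one_mul,
          ← hM]
        ring

lemma double_one_sub (hf : Continuous f) (hg : Continuous g)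
    (hfm : ∫ t in (0:ℝ)..1, f t = 1) (hgm : ∫ s in (0:ℝ)..1, g s = 1)
    (hg0 : ∀ s ∈ Set.Icc (0:ℝ) 1, 0 ≤ g s)
    (hmeas : Measurable h) (h0 : ∀ q, 0 ≤ h q) (h1 : ∀ q, h q ≤ 1) :
    ∫ t in (0:ℝ)..1, ∫ s in (0:ℝ)..1, f t * g s * (1 - h (t, s))
      = 1 - ∫ t in (0:ℝ)..1, ∫ s in (0:ℝ)..1, f t * g s * h (t, s) := by
  simp_rw [mul_assoc, intervalIntegral.integral_const_mul]
  have hJ' : ∀ t : ℝ, (∫ s in (0:ℝ)..1, g s * (1 - h (t, s)))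
      = 1 - ∫ s in (0:ℝ)..1, g s * h (t, s) := by
    intro t
    have e : ∀ s : ℝ, g s * (1 - h (t, s)) = g s - g s * h (t, s) := fun s => by ring
    simp_rw [e]
    rw [intervalIntegral.integral_sub (hg.intervalIntegrable 0 1)
      (inner_ii hg hmeas h0 h1 t), hgm]
  simp_rw [hJ', mul_sub, mul_one]
  rw [intervalIntegral.integral_sub (hf.intervalIntegrable 0 1)
    (outer_ii hf hg hg0 hgm hmeas h0 h1), hfm]

end core2

section ptwise

variable {G : Set (ℝ × ℝ)}

lemma hG0 (q : ℝ × ℝ) : 0 ≤ Set.indicator G (fun _ => (1:ℝ)) q :=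
  Set.indicator_nonneg (fun _ _ => zero_le_one) q

lemma hG1 (q : ℝ × ℝ) : Set.indicator G (fun _ => (1:ℝ)) q ≤ 1 := by
  by_cases hq : q ∈ G
  · rw [Set.indicator_of_mem hq]
  · rw [Set.indicator_of_notMem hq]; exact zero_le_one

lemma indApprox_ptwise (hGcl : IsClosed G) {p : ℝ × ℝ}
    (hx : p.1 ∈ Set.Icc (0:ℝ) 1) (hy : p.2 ∈ Set.Icc (0:ℝ) 1) (hpf : p ∉ frontier G) :
    Tendsto (fun a : ℕ × ℕ =>
        |indApprox G a.1 a.2 p.1 p.2 - Set.indicator G (fun _ => (1:ℝ)) p|)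
      atTop (nhds 0) := by
  have hGmeas : Measurable (Set.indicator G (fun _ => (1:ℝ))) :=
    measurable_const.indicator hGcl.measurableSet
  have key : ∃ δ : ℝ, 0 < δ ∧ ∀ α α' : ℕ, 1 ≤ α → 1 ≤ α' →
      |indApprox G α α' p.1 p.2 - Set.indicator G (fun _ => (1:ℝ)) p|
        ≤ (5/α + 5/α')/δ^2 := by
    by_cases hpG : p ∈ G
    · -- interior case
      have hpi : p ∈ interior G := by
        by_contra hni
        exact hpf (by rw [hGcl.frontier_eq]; exact ⟨hpG, hni⟩)
      obtain ⟨δ, hδ, hball⟩ := Metric.isOpen_iff.mp isOpen_interior p hpi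
      refine ⟨δ, hδ, fun α α' hα hα' => ?_⟩
      rw [Set.indicator_of_mem hpG]
      set k := ⌊(α:ℝ) * p.1⌋₊
      set k' := ⌊(α':ℝ) * p.2⌋₊
      have hfm := nker_integral k (α - k)
      have hgm := nker_integral k' (α' - k')
      have hf0 : ∀ t ∈ Set.Icc (0:ℝ) 1, 0 ≤ nker k (α - k) t :=
        fun t ht => nker_nonneg _ _ ht.1 ht.2
      have hg0 : ∀ s ∈ Set.Icc (0:ℝ) 1, 0 ≤ nker k' (α' - k') s :=
        fun s hs => nker_nonneg _ _ hs.1 hs.2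
      have hz : ∀ t s : ℝ, |t - p.1| < δ → |s - p.2| < δ →
          1 - Set.indicator G (fun _ => (1:ℝ)) (t, s) = 0 := by
        intro t s ht hs
        have : (t, s) ∈ Metric.ball p δ := by
          rw [Metric.mem_ball, Prod.dist_eq, Real.dist_eq, Real.dist_eq]
          exact max_lt ht hs
        rw [Set.indicator_of_mem (interior_subset (hball this)), sub_self]
      have hA : indApprox G α α' p.1 p.2
          = ∫ t in (0:ℝ)..1, ∫ s in (0:ℝ)..1,
              nker k (α - k) t * nker k' (α' - k') s
                * Set.indicator G (fun _ => (1:ℝ)) (t, s) := by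
        simp_rw [indApprox, betaKer_eq]; rfl
      have hsub := double_one_sub (nker_cont k (α-k)) (nker_cont k' (α'-k')) hfm hgm hg0
        hGmeas hG0 hG1
      have hnn := core_nonneg (h := fun q => 1 - Set.indicator G (fun _ => (1:ℝ)) q)
        hf0 hg0 (fun q => sub_nonneg.mpr (hG1 q))
      have hbd := core_bound (x := p.1) (y := p.2)
        (h := fun q => 1 - Set.indicator G (fun _ => (1:ℝ)) q) hδ (nker_cont k (α-k)) (nker_cont k' (α'-k'))
        hf0 hg0 hfm hgm (measurable_const.sub hGmeas)
        (fun q => sub_nonneg.mpr (hG1 q)) (fun q => by have := hG0 (G := G) q; linarith) hz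
      rw [hA, abs_of_nonpos (by linarith [hsub ▸ hnn]), neg_sub]
      calc 1 - (∫ t in (0:ℝ)..1, ∫ s in (0:ℝ)..1, _) ≤ _ := le_of_eq hsub.symm
        _ ≤ _ := hbd
        _ ≤ (5/α + 5/α')/δ^2 := by
            gcongr
            · exact nker_var_bound α hα hx.1 hx.2
            · exact nker_var_bound α' hα' hy.1 hy.2
    · -- exterior case
      have hpe : p ∈ Gᶜ := hpG
      obtain ⟨δ, hδ, hball⟩ := Metric.isOpen_iff.mp hGcl.isOpen_compl p hpe
      refine ⟨δ, hδ, fun α α' hα hα' => ?_⟩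
      rw [Set.indicator_of_notMem hpG, sub_zero]
      set k := ⌊(α:ℝ) * p.1⌋₊
      set k' := ⌊(α':ℝ) * p.2⌋₊
      have hfm := nker_integral k (α - k)
      have hgm := nker_integral k' (α' - k')
      have hf0 : ∀ t ∈ Set.Icc (0:ℝ) 1, 0 ≤ nker k (α - k) t :=
        fun t ht => nker_nonneg _ _ ht.1 ht.2
      have hg0 : ∀ s ∈ Set.Icc (0:ℝ) 1, 0 ≤ nker k' (α' - k') s :=
        fun s hs => nker_nonneg _ _ hs.1 hs.2
      have hz : ∀ t s : ℝ, |t - p.1| < δ → |s - p.2| < δ →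
          Set.indicator G (fun _ => (1:ℝ)) (t, s) = 0 := by
        intro t s ht hs
        have : (t, s) ∈ Metric.ball p δ := by
          rw [Metric.mem_ball, Prod.dist_eq, Real.dist_eq, Real.dist_eq]
          exact max_lt ht hs
        exact Set.indicator_of_notMem (hball this) _
      have hA : indApprox G α α' p.1 p.2
          = ∫ t in (0:ℝ)..1, ∫ s in (0:ℝ)..1,
              nker k (α - k) t * nker k' (α' - k') s
                * Set.indicator G (fun _ => (1:ℝ)) (t, s) := by
        simp_rw [indApprox, betaKer_eq]; rfl
      have hnn := core_nonneg (h := Set.indicator G (fun _ => (1:ℝ))) hf0 hg0 hG0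
      have hbd := core_bound (x := p.1) (y := p.2) hδ (nker_cont k (α-k)) (nker_cont k' (α'-k'))
        hf0 hg0 hfm hgm hGmeas hG0 hG1 hz
      rw [hA, abs_of_nonneg hnn]
      calc (∫ t in (0:ℝ)..1, ∫ s in (0:ℝ)..1, _) ≤ _ := hbd
        _ ≤ (5/α + 5/α')/δ^2 := by
            gcongr
            · exact nker_var_bound α hα hx.1 hx.2
            · exact nker_var_bound α' hα' hy.1 hy.2
  obtain ⟨δ, hδ, hbound⟩ := key
  have hB : Tendsto (fun a : ℕ × ℕ => ((5:ℝ)/a.1 + 5/a.2)/δ^2) atTop (nhds 0) := by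
    have t1 : Tendsto (fun a : ℕ × ℕ => (5:ℝ)/a.1) atTop (nhds 0) := by
      rw [← prod_atTop_atTop_eq]
      exact (tendsto_const_div_atTop_nhds_zero_nat 5).comp tendsto_fst
    have t2 : Tendsto (fun a : ℕ × ℕ => (5:ℝ)/a.2) atTop (nhds 0) := by
      rw [← prod_atTop_atTop_eq]
      exact (tendsto_const_div_atTop_nhds_zero_nat 5).comp tendsto_snd
    have := (t1.add t2).div_const (δ^2)
    simpa using this
  apply squeeze_zero' (Filter.Eventually.of_forall fun a => abs_nonneg _) _ hB
  filter_upwards [eventually_ge_atTop (1, 1)] with a ha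
  exact hbound a.1 a.2 ha.1 ha.2

end ptwise

lemma indApprox_nonneg (G : Set (ℝ × ℝ)) (hGcl : IsClosed G) (α α' : ℕ) (x y : ℝ) :
    0 ≤ indApprox G α α' x y := by
  have hA : indApprox G α α' x y
      = ∫ t in (0:ℝ)..1, ∫ s in (0:ℝ)..1,
          nker ⌊(α:ℝ)*x⌋₊ (α - ⌊(α:ℝ)*x⌋₊) t * nker ⌊(α':ℝ)*y⌋₊ (α' - ⌊(α':ℝ)*y⌋₊) s
            * Set.indicator G (fun _ => (1:ℝ)) (t, s) := by
    simp_rw [indApprox, betaKer_eq]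
  rw [hA]
  exact core_nonneg (fun t ht => nker_nonneg _ _ ht.1 ht.2)
    (fun s hs => nker_nonneg _ _ hs.1 hs.2) hG0

lemma indApprox_le_one (G : Set (ℝ × ℝ)) (hGcl : IsClosed G) (α α' : ℕ) (x y : ℝ) :
    indApprox G α α' x y ≤ 1 := by
  have hGmeas : Measurable (Set.indicator G (fun _ => (1:ℝ))) :=
    measurable_const.indicator hGcl.measurableSet
  have hA : indApprox G α α' x y
      = ∫ t in (0:ℝ)..1, ∫ s in (0:ℝ)..1,
          nker ⌊(α:ℝ)*x⌋₊ (α - ⌊(α:ℝ)*x⌋₊) t * nker ⌊(α':ℝ)*y⌋₊ (α' - ⌊(α':ℝ)*y⌋₊) s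
            * Set.indicator G (fun _ => (1:ℝ)) (t, s) := by
    simp_rw [indApprox, betaKer_eq]
  have hsub := double_one_sub (nker_cont _ _) (nker_cont _ _)
    (nker_integral ⌊(α:ℝ)*x⌋₊ (α - ⌊(α:ℝ)*x⌋₊)) (nker_integral ⌊(α':ℝ)*y⌋₊ (α' - ⌊(α':ℝ)*y⌋₊))
    (fun s hs => nker_nonneg _ _ hs.1 hs.2) hGmeas hG0 hG1
  have hnn := core_nonneg (h := fun q => 1 - Set.indicator G (fun _ => (1:ℝ)) q)
    (fun t ht => nker_nonneg ⌊(α:ℝ)*x⌋₊ (α - ⌊(α:ℝ)*x⌋₊) ht.1 ht.2)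
    (fun s hs => nker_nonneg ⌊(α':ℝ)*y⌋₊ (α' - ⌊(α':ℝ)*y⌋₊) hs.1 hs.2)
    (fun q => sub_nonneg.mpr (hG1 q))
  rw [hA]
  linarith [hsub ▸ hnn]

lemma indApprox_meas (G : Set (ℝ × ℝ)) (α α' : ℕ) :
    Measurable (fun p : ℝ × ℝ => indApprox G α α' p.1 p.2) := by
  have e : (fun p : ℝ × ℝ => indApprox G α α' p.1 p.2)
      = (fun kl : ℕ × ℕ => ∫ t in (0:ℝ)..1, ∫ s in (0:ℝ)..1,
            nker kl.1 (α - kl.1) t * nker kl.2 (α' - kl.2) s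
              * Set.indicator G (fun _ => (1:ℝ)) (t, s))
          ∘ (fun p : ℝ × ℝ => (⌊(α:ℝ)*p.1⌋₊, ⌊(α':ℝ)*p.2⌋₊)) := by
    funext p
    simp only [Function.comp_apply]
    simp_rw [indApprox, betaKer_eq]
  rw [e]
  exact (measurable_of_countable _).comp
    (((measurable_const.mul measurable_fst).nat_floor).prodMk
      ((measurable_const.mul measurable_snd).nat_floor))


theorem stmt_8 (G : Set (ℝ × ℝ)) (hGcl : IsClosed G) (hGcv : Convex ℝ G)
    (hGsub : G ⊆ Set.Icc (0:ℝ) 1 ×ˢ Set.Icc (0:ℝ) 1) :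
    Tendsto (fun a : ℕ × ℕ =>
        ∫ p in Set.Icc (0:ℝ) 1 ×ˢ Set.Icc (0:ℝ) 1,
          |indApprox G a.1 a.2 p.1 p.2 - Set.indicator G (fun _ => (1:ℝ)) p|)
      atTop (nhds 0) := by
  set S : Set (ℝ × ℝ) := Set.Icc (0:ℝ) 1 ×ˢ Set.Icc (0:ℝ) 1 with hS
  have hSmeas : MeasurableSet S := measurableSet_Icc.prod measurableSet_Icc
  have hGmeas : Measurable (Set.indicator G (fun _ => (1:ℝ))) :=
    measurable_const.indicator hGcl.measurableSet
  have hfr : volume (frontier G) = 0 := hGcv.addHaar_frontier volume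
  have hconc : Tendsto (fun a : ℕ × ℕ =>
      ∫ p in S, |indApprox G a.1 a.2 p.1 p.2 - Set.indicator G (fun _ => (1:ℝ)) p|)
      atTop (nhds (∫ _ in S, (0:ℝ))) := by
    apply MeasureTheory.tendsto_integral_filter_of_dominated_convergence
      (bound := fun _ => (2:ℝ))
    · refine Filter.Eventually.of_forall fun a => ?_
      exact (((indApprox_meas G a.1 a.2).sub hGmeas).abs).aestronglyMeasurable
    · refine Filter.Eventually.of_forall fun a => ?_
      refine Filter.Eventually.of_forall fun p => ?_
      have h1 := indApprox_nonneg G hGcl a.1 a.2 p.1 p.2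
      have h2 := indApprox_le_one G hGcl a.1 a.2 p.1 p.2
      have h3 := hG0 (G := G) p
      have h4 := hG1 (G := G) p
      rw [Real.norm_eq_abs, abs_abs, abs_le]
      constructor <;> linarith
    · refine ((integrableOn_const_iff enorm_ne_top).mpr (Or.inr ?_))
      exact (isCompact_Icc.prod isCompact_Icc).measure_lt_top
    · have h5 : ∀ᵐ p ∂(volume.restrict S), p ∉ frontier G := by
        apply ae_restrict_of_ae
        rw [MeasureTheory.ae_iff]
        simpa using hfr
      have h6 : ∀ᵐ p ∂(volume.restrict S), p ∈ S := ae_restrict_mem hSmeas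
      filter_upwards [h5, h6] with p hp5 hp6
      exact indApprox_ptwise hGcl hp6.1 hp6.2 hp5
  simpa using hconc
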